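/- There exist a finite DAG G, a memory budget r₀ ∈ ℤ⁺ divisible by 4, and g ∈ ℤ⁺ such that in the fair comparison the optimal MPP cost is non-monotonic in the number of processors: OPT^(2) (2 processors, memory r₀/2 each) < OPT^(1) (1 processor, memory r₀) and OPT^(2) (2 processors, memory r₀/2 each) < OPT^(4) (4 processors, memory r₀/4 each). -/

import Mathlib

open scoped Classical

/-- A relation is a DAG edge relation if its transitive closure is irreflexive
(i.e., the directed graph is acyclic). -/
def IsDag {V : Type*} (E : V → V → Prop) : Prop := Irreflexive (Relation.TransGen E)

namespace MPP

variable {V : Type*} [DecidableEq V] {k : ℕ}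

/-- A configuration of multiprocessor red-blue pebbling: a set of red pebbles
for each of the `k` processors, and a set of blue pebbles. -/
structure Conf (V : Type*) (k : ℕ) where
  red : Fin k → Finset V
  blue : Finset V

/-- Moves of multiprocessor red-blue pebbling. `save`/`load` are the parallel I/O
moves (R1-M)/(R2-M), `compute` is (R3-M), and the removals are (R4-M). -/
inductive Move (V : Type*) (k : ℕ) where
  | save (m : ℕ) (f : Fin m → Fin k) (v : Fin m → V)
  | load (m : ℕ) (f : Fin m → Fin k) (v : Fin m → V)
  | compute (m : ℕ) (f : Fin m → Fin k) (v : Fin m → V)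
  | removeRed (j : Fin k) (x : V)
  | removeBlue (x : V)

/-- Add, for each `i`, the node `v i` to the red pebbles of processor `f i`. -/
def addRed (C : Conf V k) {m : ℕ} (f : Fin m → Fin k) (v : Fin m → V) :
    Fin k → Finset V :=
  fun j => C.red j ∪ (Finset.univ.filter (fun i => f i = j)).image v

/-- The effect of a move on a configuration. -/
def apply : Move V k → Conf V k → Conf V k
  | .save _ _ v, C => ⟨C.red, C.blue ∪ Finset.univ.image v⟩
  | .load _ f v, C => ⟨addRed C f v, C.blue⟩
  | .compute _ f v, C => ⟨addRed C f v, C.blue⟩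
  | .removeRed j x, C => ⟨Function.update C.red j (C.red j \ {x}), C.blue⟩
  | .removeBlue x, C => ⟨C.red, C.blue \ {x}⟩

/-- When a move may legally be performed in a given configuration. -/
def Legal (E : V → V → Prop) : Conf V k → Move V k → Prop
  | C, .save m f v => m ≤ k ∧ Function.Injective f ∧ ∀ i, v i ∈ C.red (f i)
  | C, .load m f v => m ≤ k ∧ Function.Injective f ∧ ∀ i, v i ∈ C.blue
  | C, .compute m f v =>
      m ≤ k ∧ Function.Injective f ∧ ∀ i, ∀ u, E u (v i) → u ∈ C.red (f i)
  | _, .removeRed _ _ => True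
  | _, .removeBlue _ => True

/-- A configuration respects the fast-memory bound `r` for every processor. -/
def Valid (r : ℕ) (C : Conf V k) : Prop := ∀ j, (C.red j).card ≤ r

/-- `Run E r C ms C'` : starting from configuration `C`, the list of moves `ms`
may be legally executed (respecting the memory bound `r` throughout) and leads
to configuration `C'`. -/
inductive Run (E : V → V → Prop) (r : ℕ) : Conf V k → List (Move V k) → Conf V k → Prop
  | nil (C : Conf V k) : Run E r C [] C
  | cons {C C'' : Conf V k} {mv : Move V k} {ms : List (Move V k)} :
      Legal E C mv → Valid r (apply mv C) → Run E r (apply mv C) ms C'' →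
      Run E r C (mv :: ms) C''

/-- Cost of a single move: `g` for I/O, `1` for compute, `0` for removal. -/
def moveCost (g : ℕ) : Move V k → ℕ
  | .save .. => g
  | .load .. => g
  | .compute .. => 1
  | .removeRed .. => 0
  | .removeBlue .. => 0

/-- Total cost of a sequence of moves. -/
def cost (g : ℕ) (ms : List (Move V k)) : ℕ := (ms.map (moveCost g)).sum

def isIO : Move V k → Bool
  | .save .. => true
  | .load .. => true
  | _ => false

/-- The number of I/O moves in a sequence of moves. -/
def ioCount (ms : List (Move V k)) : ℕ := (ms.filter isIO).length

def isCompute : Move V k → Bool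
  | .compute .. => true
  | _ => false

/-- The number of compute moves in a sequence of moves. -/
def computeCount (ms : List (Move V k)) : ℕ := (ms.filter isCompute).length

/-- A sink of the DAG: a node with no outgoing edge. -/
def IsSink (E : V → V → Prop) (v : V) : Prop := ∀ u, ¬ E v u

/-- A terminal configuration: every sink carries at least one pebble. -/
def Terminal (E : V → V → Prop) (C : Conf V k) : Prop :=
  ∀ v, IsSink E v → v ∈ C.blue ∨ ∃ j, v ∈ C.red j

/-- The initial (all-empty) configuration. -/
def init (V : Type*) (k : ℕ) : Conf V k := ⟨fun _ => ∅, ∅⟩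

/-- `ms` is a pebbling strategy: a legal run from the empty configuration ending
in a terminal configuration. -/
def IsPebbling (E : V → V → Prop) (r : ℕ) (ms : List (Move V k)) : Prop :=
  ∃ Cf, Run E r (init V k) ms Cf ∧ Terminal E Cf

/-- The optimal (minimum) cost of a pebbling strategy with `k` processors,
memory bound `r` per processor, and I/O cost `g`. -/
noncomputable def optCost (E : V → V → Prop) (k r g : ℕ) : ℕ :=
  sInf {c | ∃ ms : List (Move V k), IsPebbling E r ms ∧ cost g ms = c}

/-- The minimum number of I/O moves among all minimum-cost pebbling strategies. -/
noncomputable def optIO (E : V → V → Prop) (k r g : ℕ) : ℕ :=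
  sInf {q | ∃ ms : List (Move V k),
    IsPebbling E r ms ∧ cost g ms = optCost E k r g ∧ ioCount ms = q}

/-- The maximum in-degree `Δ_in` of the DAG. -/
noncomputable def maxInDeg (E : V → V → Prop) [Fintype V] : ℕ :=
  Finset.univ.sup fun v => (Finset.univ.filter fun u => E u v).card

/-- The set of nodes computed by a move. -/
def computes : Move V k → Set V
  | .compute _ _ v => Set.range v
  | _ => ∅

/-- `x` is computed by the move at position `s` of `ms`. -/
def ComputedAt (ms : List (Move V k)) (s : ℕ) (x : V) : Prop :=
  ∃ mv, ms[s]? = some mv ∧ x ∈ computes mv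

/-- The set of nodes computed by some move strictly before position `t`. -/
def computedBefore (ms : List (Move V k)) (t : ℕ) : Set V :=
  {x | ∃ s < t, ComputedAt ms s x}

/-- `x` is ready at position `t`: it has not yet been computed, but all its
in-neighbors have been. -/
def Ready (E : V → V → Prop) (ms : List (Move V k)) (t : ℕ) (x : V) : Prop :=
  x ∉ computedBefore ms t ∧ ∀ u, E u x → u ∈ computedBefore ms t

/-- The number of nodes that are ready at position `t`. -/
noncomputable def readyCount (E : V → V → Prop) [Fintype V]
    (ms : List (Move V k)) (t : ℕ) : ℕ :=
  (Finset.univ.filter (Ready E ms t)).card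

end MPP

/-! ### Auxiliary development for stmt10 -/

namespace MPPAux

open MPP

/-- The edge list of the counterexample DAG: two disjoint copies of a
5-node gadget `a, b, c1 ← {a,b}, c2 ← {c1,a}, c3 ← {c2,b}`. -/
def edges : List (Fin 10 × Fin 10) :=
  [(0,2),(1,2),(2,3),(0,3),(3,4),(1,4),(5,7),(6,7),(7,8),(5,8),(8,9),(6,9)]

/-- The edge relation of the counterexample DAG. -/
def E10 : Fin 10 → Fin 10 → Prop := fun u v => (u, v) ∈ edges

instance : DecidableRel E10 := fun _ _ => inferInstanceAs (Decidable (_ ∈ _))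

instance : DecidablePred (IsSink E10) :=
  fun v => inferInstanceAs (Decidable (∀ u, ¬ E10 v u))

lemma E10_lt {u v : Fin 10} (h : E10 u v) : u < v := by
  revert h
  have : ∀ u v : Fin 10, E10 u v → u < v := by decide
  exact this u v

lemma isDag_E10 : IsDag E10 := by
  intro a h
  have hlt : ∀ {u v : Fin 10}, Relation.TransGen E10 u v → u < v := by
    intro u v h
    induction h with
    | single h => exact E10_lt h
    | tail _ h ih => exact lt_trans ih (E10_lt h)
  exact absurd (hlt h) (lt_irrefl a)

/-- Potential function for the `k = 4` lower bound (distance-to-go of the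
abstract single-processor pebbling game with memory 3). -/
def w (S : Finset (Fin 10)) : ℕ :=
  if (4 : Fin 10) ∈ S then 0
  else if 3 ∈ S then (if 1 ∈ S then 1 else 2)
  else if 2 ∈ S then (if 0 ∈ S then 3 else 4)
  else if 0 ∈ S then (if 1 ∈ S then 4 else 5)
  else if 1 ∈ S then 5 else 6

set_option maxHeartbeats 1000000 in
lemma w_remove (S : Finset (Fin 10)) (x : Fin 10) : w S ≤ w (S \ {x}) := by
  unfold w
  simp only [Finset.mem_sdiff, Finset.mem_singleton]
  split_ifs <;> first | omega | tauto

lemma w_final {S : Finset (Fin 10)} (h : (4 : Fin 10) ∈ S) : w S = 0 := by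
  simp [w, h]

lemma w_empty : w (∅ : Finset (Fin 10)) = 6 := by simp [w]

set_option maxHeartbeats 1000000 in
lemma w_compute (S : Finset (Fin 10)) (v : Fin 10)
    (hp : ∀ u, E10 u v → u ∈ S) (hc : (S ∪ {v}).card ≤ 3) :
    w S ≤ w (S ∪ {v}) + 1 := by
  rcases Nat.lt_or_ge v.val 5 with hv | hv
  · have hv5 : v = 0 ∨ v = 1 ∨ v = 2 ∨ v = 3 ∨ v = 4 :=
      (by decide : ∀ x : Fin 10, x.val < 5 →
        (x = 0 ∨ x = 1 ∨ x = 2 ∨ x = 3 ∨ x = 4)) v hv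
    rcases hv5 with rfl | rfl | rfl | rfl | rfl
    · -- v = 0
      unfold w
      simp only [Finset.mem_union, Finset.mem_singleton, show ((0 : Fin 10) = 0) ↔ True from by decide, show ((1 : Fin 10) = 0) ↔ False from by decide, show ((2 : Fin 10) = 0) ↔ False from by decide, show ((3 : Fin 10) = 0) ↔ False from by decide, show ((4 : Fin 10) = 0) ↔ False from by decide,
        or_true, or_false, iff_true, iff_false]
      split_ifs <;> first | omega | tauto
    · -- v = 1
      unfold w
      simp only [Finset.mem_union, Finset.mem_singleton, show ((0 : Fin 10) = 1) ↔ False from by decide, show ((1 : Fin 10) = 1) ↔ True from by decide, show ((2 : Fin 10) = 1) ↔ False from by decide, show ((3 : Fin 10) = 1) ↔ False from by decide, show ((4 : Fin 10) = 1) ↔ False from by decide,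
        or_true, or_false, iff_true, iff_false]
      split_ifs <;> first | omega | tauto
    · -- v = 2
      have hp0 : (0 : Fin 10) ∈ S := hp 0 (by decide)
      have hp1 : (1 : Fin 10) ∈ S := hp 1 (by decide)
      unfold w
      simp only [Finset.mem_union, Finset.mem_singleton, show ((0 : Fin 10) = 2) ↔ False from by decide, show ((1 : Fin 10) = 2) ↔ False from by decide, show ((2 : Fin 10) = 2) ↔ True from by decide, show ((3 : Fin 10) = 2) ↔ False from by decide, show ((4 : Fin 10) = 2) ↔ False from by decide,
        or_true, or_false, iff_true, iff_false]
      split_ifs <;> first | omega | tauto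
    · -- v = 3
      have hp2 : (2 : Fin 10) ∈ S := hp 2 (by decide)
      have hp0 : (0 : Fin 10) ∈ S := hp 0 (by decide)
      have hbad : (1 : Fin 10) ∈ S → False := by
        intro h1
        have hsub : ({0, 1, 2, 3} : Finset (Fin 10)) ⊆ S ∪ {3} := by
          intro i hi
          simp only [Finset.mem_insert, Finset.mem_singleton] at hi
          rcases hi with rfl | rfl | rfl | rfl <;>
            simp [Finset.mem_union, hp0, h1, hp2]
        have h4le := Finset.card_le_card hsub
        have hc4 : ({0, 1, 2, 3} : Finset (Fin 10)).card = 4 := by decide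
        omega
      unfold w
      simp only [Finset.mem_union, Finset.mem_singleton, show ((0 : Fin 10) = 3) ↔ False from by decide, show ((1 : Fin 10) = 3) ↔ False from by decide, show ((2 : Fin 10) = 3) ↔ False from by decide, show ((3 : Fin 10) = 3) ↔ True from by decide, show ((4 : Fin 10) = 3) ↔ False from by decide,
        or_true, or_false, iff_true, iff_false]
      split_ifs <;> first | omega | tauto
    · -- v = 4
      have hp3 : (3 : Fin 10) ∈ S := hp 3 (by decide)
      have hp1 : (1 : Fin 10) ∈ S := hp 1 (by decide)
      unfold w
      simp only [Finset.mem_union, Finset.mem_singleton, show ((0 : Fin 10) = 4) ↔ False from by decide, show ((1 : Fin 10) = 4) ↔ False from by decide, show ((2 : Fin 10) = 4) ↔ False from by decide, show ((3 : Fin 10) = 4) ↔ False from by decide, show ((4 : Fin 10) = 4) ↔ True from by decide,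
        or_true, or_false, iff_true, iff_false]
      split_ifs <;> first | omega | tauto
  · -- v ∉ {0,…,4} : the low memberships are unchanged
    have hne : ∀ i : Fin 10, i.val < 5 → (i ∈ S ∪ {v} ↔ i ∈ S) := by
      intro i hi
      simp only [Finset.mem_union, Finset.mem_singleton]
      constructor
      · rintro (h | rfl)
        · exact h
        · omega
      · exact Or.inl
    unfold w
    simp only [hne 0 (by decide), hne 1 (by decide), hne 2 (by decide),
      hne 3 (by decide), hne 4 (by decide)]
    split_ifs <;> omega

/-! ### Decidability instances -/

instance instDecLegal {k : ℕ} (C : Conf (Fin 10) k) :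
    (mv : Move (Fin 10) k) → Decidable (Legal E10 C mv)
  | .save m f v => inferInstanceAs (Decidable
      (m ≤ k ∧ Function.Injective f ∧ ∀ i, v i ∈ C.red (f i)))
  | .load m f v => inferInstanceAs (Decidable
      (m ≤ k ∧ Function.Injective f ∧ ∀ i, v i ∈ C.blue))
  | .compute m f v => inferInstanceAs (Decidable
      (m ≤ k ∧ Function.Injective f ∧ ∀ i, ∀ u, E10 u (v i) → u ∈ C.red (f i)))
  | .removeRed _ _ => .isTrue trivial
  | .removeBlue _ => .isTrue trivial

instance instDecValid {k r : ℕ} (C : Conf (Fin 10) k) : Decidable (Valid r C) :=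
  inferInstanceAs (Decidable (∀ j, (C.red j).card ≤ r))

/-! ### Generic bookkeeping lemmas -/

section Generic

variable {V : Type*} [DecidableEq V] {k r g : ℕ} {E : V → V → Prop}

/-- All pebbles (red anywhere, or blue) of a configuration. -/
def pebblesF (C : Conf V k) : Finset V := Finset.univ.biUnion C.red ∪ C.blue

lemma mem_pebblesF {C : Conf V k} {x : V} :
    x ∈ pebblesF C ↔ (∃ j, x ∈ C.red j) ∨ x ∈ C.blue := by
  simp [pebblesF]

/-- The nodes computed by a single move, as a `Finset`. -/
def moveCompF : Move V k → Finset V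
  | .compute _ _ v => Finset.univ.image v
  | _ => ∅

/-- The nodes computed by a sequence of moves, as a `Finset`. -/
def computedF : List (Move V k) → Finset V
  | [] => ∅
  | mv :: ms => moveCompF mv ∪ computedF ms

lemma computedF_cons (mv : Move V k) (ms : List (Move V k)) :
    computedF (mv :: ms) = moveCompF mv ∪ computedF ms := rfl

lemma mem_addRed {m : ℕ} {C : Conf V k} {f : Fin m → Fin k} {v : Fin m → V}
    {j : Fin k} {x : V} :
    x ∈ addRed C f v j ↔ x ∈ C.red j ∨ ∃ i, f i = j ∧ v i = x := by
  simp [addRed]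

lemma pebbles_step {C : Conf V k} {mv : Move V k} (hl : Legal E C mv) :
    pebblesF (MPP.apply mv C) ⊆ pebblesF C ∪ moveCompF mv := by
  intro x hx
  rw [Finset.mem_union]
  cases mv with
  | save m f v =>
    rw [mem_pebblesF] at hx
    rcases hx with ⟨j, hj⟩ | hb
    · exact Or.inl (mem_pebblesF.mpr (Or.inl ⟨j, hj⟩))
    · rcases Finset.mem_union.1 hb with hb | hb
      · exact Or.inl (mem_pebblesF.mpr (Or.inr hb))
      · obtain ⟨i, -, rfl⟩ := Finset.mem_image.1 hb
        exact Or.inl (mem_pebblesF.mpr (Or.inl ⟨f i, hl.2.2 i⟩))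
  | load m f v =>
    rw [mem_pebblesF] at hx
    rcases hx with ⟨j, hj⟩ | hb
    · rcases mem_addRed.1 hj with h | ⟨i, -, rfl⟩
      · exact Or.inl (mem_pebblesF.mpr (Or.inl ⟨j, h⟩))
      · exact Or.inl (mem_pebblesF.mpr (Or.inr (hl.2.2 i)))
    · exact Or.inl (mem_pebblesF.mpr (Or.inr hb))
  | compute m f v =>
    rw [mem_pebblesF] at hx
    rcases hx with ⟨j, hj⟩ | hb
    · rcases mem_addRed.1 hj with h | ⟨i, -, rfl⟩
      · exact Or.inl (mem_pebblesF.mpr (Or.inl ⟨j, h⟩))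
      · refine Or.inr ?_
        simp [moveCompF]
    · exact Or.inl (mem_pebblesF.mpr (Or.inr hb))
  | removeRed j' y =>
    rw [mem_pebblesF] at hx
    rcases hx with ⟨j, hj⟩ | hb
    · refine Or.inl (mem_pebblesF.mpr (Or.inl ?_))
      by_cases h : j = j'
      · subst h
        rw [show (MPP.apply (Move.removeRed j y) C).red j = C.red j \ {y} from
          Function.update_self _ _ _] at hj
        exact ⟨j, (Finset.mem_sdiff.1 hj).1⟩
      · rw [show (MPP.apply (Move.removeRed j' y) C).red j = C.red j from
          Function.update_of_ne h _ _] at hj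
        exact ⟨j, hj⟩
    · exact Or.inl (mem_pebblesF.mpr (Or.inr hb))
  | removeBlue y =>
    rw [mem_pebblesF] at hx
    rcases hx with ⟨j, hj⟩ | hb
    · exact Or.inl (mem_pebblesF.mpr (Or.inl ⟨j, hj⟩))
    · exact Or.inl (mem_pebblesF.mpr (Or.inr (Finset.mem_sdiff.1 hb).1))

lemma run_pebbles {C C' : Conf V k} {ms : List (Move V k)} (h : Run E r C ms C') :
    pebblesF C' ⊆ pebblesF C ∪ computedF ms := by
  induction h with
  | nil C => simp [computedF]
  | @cons C₀ C₂ mv ms hl hv hr ih =>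
    intro x hx
    rcases Finset.mem_union.1 (ih hx) with h1 | h2
    · rcases Finset.mem_union.1 (pebbles_step hl h1) with h3 | h4
      · exact Finset.mem_union_left _ h3
      · refine Finset.mem_union_right _ ?_
        rw [computedF_cons]
        exact Finset.mem_union_left _ h4
    · refine Finset.mem_union_right _ ?_
      rw [computedF_cons]
      exact Finset.mem_union_right _ h2

lemma run_closure {C C' : Conf V k} {ms : List (Move V k)} (h : Run E r C ms C') :
    ∀ x ∈ computedF ms, ∀ u, E u x → u ∈ pebblesF C ∪ computedF ms := by
  induction h with
  | nil C => intro x hx; simp [computedF] at hx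
  | @cons C₀ C₂ mv ms hl hv hr ih =>
    intro x hx u hu
    rw [computedF_cons, Finset.mem_union] at hx
    rcases hx with h1 | h2
    · cases mv with
      | compute m f v =>
        simp only [moveCompF, Finset.mem_image, Finset.mem_univ, true_and] at h1
        obtain ⟨i, rfl⟩ := h1
        exact Finset.mem_union_left _
          (mem_pebblesF.mpr (Or.inl ⟨f i, hl.2.2 i u hu⟩))
      | save m f v => simp [moveCompF] at h1
      | load m f v => simp [moveCompF] at h1
      | removeRed j' y => simp [moveCompF] at h1
      | removeBlue y => simp [moveCompF] at h1
    · rcases Finset.mem_union.1 (ih x h2 u hu) with h3 | h4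
      · rcases Finset.mem_union.1 (pebbles_step hl h3) with h5 | h6
        · exact Finset.mem_union_left _ h5
        · refine Finset.mem_union_right _ ?_
          rw [computedF_cons]
          exact Finset.mem_union_left _ h6
      · refine Finset.mem_union_right _ ?_
        rw [computedF_cons]
        exact Finset.mem_union_right _ h4

lemma cost_eq (g : ℕ) (ms : List (Move V k)) :
    cost g ms = g * ioCount ms + computeCount ms := by
  induction ms with
  | nil => simp [cost, ioCount, computeCount]
  | cons mv ms ih =>
    cases mv <;>
      simp [cost, ioCount, computeCount, List.filter_cons, isIO, isCompute,
        moveCost, List.map_cons, List.sum_cons, Nat.mul_add, Nat.mul_one] at ih ⊢ <;>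
      omega

lemma run_computed_card {C C' : Conf V 1} {ms : List (Move V 1)}
    (h : Run E r C ms C') : (computedF ms).card ≤ computeCount ms := by
  induction h with
  | nil C => simp [computedF, computeCount]
  | @cons C₀ C₂ mv ms hl hv hr ih =>
    rw [computedF_cons]
    refine le_trans (Finset.card_union_le _ _) ?_
    cases mv with
    | compute m f v =>
      have hm : m ≤ 1 := hl.1
      have h1 : (moveCompF (Move.compute m f v : Move V 1)).card ≤ 1 := by
        simp only [moveCompF]
        refine le_trans Finset.card_image_le ?_
        simpa using hm
      have hcc : computeCount (Move.compute m f v :: ms) = computeCount ms + 1 := by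
        simp [computeCount, List.filter_cons, isCompute]
      omega
    | save m f v =>
      have hcc : computeCount (Move.save m f v :: ms) = computeCount ms := by
        simp [computeCount, List.filter_cons, isCompute]
      have h1 : (moveCompF (Move.save m f v : Move V 1)).card = 0 := by
        simp [moveCompF]
      omega
    | load m f v =>
      have hcc : computeCount (Move.load m f v :: ms) = computeCount ms := by
        simp [computeCount, List.filter_cons, isCompute]
      have h1 : (moveCompF (Move.load m f v : Move V 1)).card = 0 := by
        simp [moveCompF]
      omega
    | removeRed j y =>
      have hcc : computeCount (Move.removeRed j y :: ms) = computeCount ms := by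
        simp [computeCount, List.filter_cons, isCompute]
      have h1 : (moveCompF (Move.removeRed j y : Move V 1)).card = 0 := by
        simp [moveCompF]
      omega
    | removeBlue y =>
      have hcc : computeCount (Move.removeBlue y :: ms) = computeCount ms := by
        simp [computeCount, List.filter_cons, isCompute]
      have h1 : (moveCompF (Move.removeBlue y : Move V 1)).card = 0 := by
        simp [moveCompF]
      omega

lemma run_blue {C C' : Conf V k} {ms : List (Move V k)} (h : Run E r C ms C') :
    (∀ mv ∈ ms, isIO mv = false) → C'.blue ⊆ C.blue := by
  induction h with
  | nil C => intro _; exact subset_rfl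
  | @cons C₀ C₂ mv ms hl hv hr ih =>
    intro hio
    have h2 := ih (fun m hm => hio m (List.mem_cons_of_mem _ hm))
    cases mv with
    | save m f v => exact absurd (hio _ List.mem_cons_self) (by simp [isIO])
    | load m f v => exact absurd (hio _ List.mem_cons_self) (by simp [isIO])
    | compute m f v => exact h2
    | removeRed j y => exact h2
    | removeBlue y => exact h2.trans (Finset.sdiff_subset)

/-- Whether a move computes a node in processor `j`. -/
def inCompJ (j : Fin k) : Move V k → Bool
  | .compute _ f _ => decide (∃ i, f i = j)
  | _ => false

lemma cntj_le (j : Fin k) (ms : List (Move V k)) :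
    (ms.filter (inCompJ j)).length ≤ computeCount ms := by
  induction ms with
  | nil => simp [computeCount]
  | cons mv ms ih =>
    cases mv with
    | compute m f v =>
      have hcc : computeCount (Move.compute m f v :: ms) = computeCount ms + 1 := by
        simp [computeCount, List.filter_cons, isCompute]
      rw [hcc, List.filter_cons]
      split <;> simp <;> omega
    | save m f v =>
      have hcc : computeCount (Move.save m f v :: ms) = computeCount ms := by
        simp [computeCount, List.filter_cons, isCompute]
      rw [hcc, List.filter_cons_of_neg (by simp [inCompJ])]
      exact ih
    | load m f v =>
      have hcc : computeCount (Move.load m f v :: ms) = computeCount ms := by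
        simp [computeCount, List.filter_cons, isCompute]
      rw [hcc, List.filter_cons_of_neg (by simp [inCompJ])]
      exact ih
    | removeRed j' y =>
      have hcc : computeCount (Move.removeRed j' y :: ms) = computeCount ms := by
        simp [computeCount, List.filter_cons, isCompute]
      rw [hcc, List.filter_cons_of_neg (by simp [inCompJ])]
      exact ih
    | removeBlue y =>
      have hcc : computeCount (Move.removeBlue y :: ms) = computeCount ms := by
        simp [computeCount, List.filter_cons, isCompute]
      rw [hcc, List.filter_cons_of_neg (by simp [inCompJ])]
      exact ih

end Generic

/-! ### The key invariant for the 4-processor lower bound -/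

lemma invariant (j : Fin 4) {C C' : Conf (Fin 10) 4} {ms : List (Move (Fin 10) 4)}
    (h : Run E10 3 C ms C') :
    (∀ mv ∈ ms, isIO mv = false) →
    w (C.red j) ≤ (ms.filter (inCompJ j)).length + w (C'.red j) := by
  induction h with
  | nil C => intro _; simp
  | @cons C₀ C₂ mv ms hl hv hr ih =>
    intro hio
    have IH := ih (fun m hm => hio m (List.mem_cons_of_mem _ hm))
    cases mv with
    | save m f v => exact absurd (hio _ List.mem_cons_self) (by simp [isIO])
    | load m f v => exact absurd (hio _ List.mem_cons_self) (by simp [isIO])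
    | compute m f v =>
      by_cases hj : ∃ i, f i = j
      · obtain ⟨i, hi⟩ := hj
        have hone : (Finset.univ.filter (fun i' => f i' = j)).image v = {v i} := by
          ext y
          simp only [Finset.mem_image, Finset.mem_filter, Finset.mem_univ,
            true_and, Finset.mem_singleton]
          constructor
          · rintro ⟨i', h1, rfl⟩
            rw [hl.2.1 (h1.trans hi.symm)]
          · rintro rfl
            exact ⟨i, hi, rfl⟩
        have hred : (MPP.apply (Move.compute m f v) C₀).red j = C₀.red j ∪ {v i} := by
          show C₀.red j ∪ (Finset.univ.filter (fun i' => f i' = j)).image v = _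
          rw [hone]
        have hcard : (C₀.red j ∪ {v i}).card ≤ 3 := by
          have h3 := hv j
          rwa [hred] at h3
        have hpred : ∀ u, E10 u (v i) → u ∈ C₀.red j := by
          intro u hu
          have := hl.2.2 i u hu
          rwa [hi] at this
        have hflt : (Move.compute m f v :: ms).filter (inCompJ j)
            = Move.compute m f v :: ms.filter (inCompJ j) := by
          refine List.filter_cons_of_pos ?_
          simp only [inCompJ, decide_eq_true_eq]
          exact ⟨i, hi⟩
        calc w (C₀.red j) ≤ w (C₀.red j ∪ {v i}) + 1 := w_compute _ _ hpred hcard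
          _ = w ((MPP.apply (Move.compute m f v) C₀).red j) + 1 := by rw [hred]
          _ ≤ ((ms.filter (inCompJ j)).length + w (C₂.red j)) + 1 :=
              Nat.add_le_add_right IH 1
          _ = ((Move.compute m f v :: ms).filter (inCompJ j)).length + w (C₂.red j) := by
              rw [hflt, List.length_cons]
              omega
      · have hred : (MPP.apply (Move.compute m f v) C₀).red j = C₀.red j := by
          show C₀.red j ∪ (Finset.univ.filter (fun i' => f i' = j)).image v = _
          have hempty : Finset.univ.filter (fun i' => f i' = j) = ∅ := by
            ext i'
            simp only [Finset.mem_filter, Finset.mem_univ, true_and,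
              Finset.notMem_empty, iff_false]
            exact fun hcontra => hj ⟨i', hcontra⟩
          rw [hempty]
          simp
        have hflt : (Move.compute m f v :: ms).filter (inCompJ j)
            = ms.filter (inCompJ j) := by
          refine List.filter_cons_of_neg ?_
          simp only [inCompJ, decide_eq_true_eq]
          exact fun hcontra => hj (by exact_mod_cast hcontra)
        rw [hflt, ← hred]
        exact IH
    | removeRed j' y =>
      have hsub : w (C₀.red j) ≤ w ((MPP.apply (Move.removeRed j' y) C₀).red j) := by
        by_cases hjj : j = j'
        · subst hjj
          rw [show (MPP.apply (Move.removeRed j y) C₀).red j = C₀.red j \ {y} from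
            Function.update_self _ _ _]
          exact w_remove _ _
        · rw [show (MPP.apply (Move.removeRed j' y) C₀).red j = C₀.red j from
            Function.update_of_ne hjj _ _]
      have hflt : (Move.removeRed j' y :: ms).filter (inCompJ j)
          = ms.filter (inCompJ j) :=
        List.filter_cons_of_neg (by simp [inCompJ])
      rw [hflt]
      exact le_trans hsub IH
    | removeBlue y =>
      have hflt : (Move.removeBlue y :: ms).filter (inCompJ j)
          = ms.filter (inCompJ j) :=
        List.filter_cons_of_neg (by simp [inCompJ])
      rw [hflt]
      exact IH

/-! ### Explicit strategies -/

/-- Optimal 2-processor strategy: 5 parallel compute moves. -/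
def ms2 : List (Move (Fin 10) 2) :=
  [.compute 2 id ![0, 5], .compute 2 id ![1, 6], .compute 2 id ![2, 7],
   .compute 2 id ![3, 8], .compute 2 id ![4, 9]]

/-- A 1-processor strategy: 10 sequential compute moves. -/
def ms1 : List (Move (Fin 10) 1) :=
  [.compute 1 (fun _ => 0) ![0], .compute 1 (fun _ => 0) ![1],
   .compute 1 (fun _ => 0) ![2], .compute 1 (fun _ => 0) ![3],
   .compute 1 (fun _ => 0) ![4], .compute 1 (fun _ => 0) ![5],
   .compute 1 (fun _ => 0) ![6], .compute 1 (fun _ => 0) ![7],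
   .compute 1 (fun _ => 0) ![8], .compute 1 (fun _ => 0) ![9]]

/-- A 4-processor strategy (memory 3 each): 6 compute moves plus removals. -/
def ms4 : List (Move (Fin 10) 4) :=
  [.compute 2 ![0, 1] ![0, 5], .compute 2 ![0, 1] ![1, 6], .compute 2 ![0, 1] ![2, 7],
   .removeRed 0 1, .removeRed 1 6,
   .compute 2 ![0, 1] ![3, 8],
   .removeRed 0 0, .removeRed 0 2, .removeRed 1 5, .removeRed 1 7,
   .compute 2 ![0, 1] ![1, 6], .compute 2 ![0, 1] ![4, 9]]

lemma pebbling2 : IsPebbling E10 6 ms2 :=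
  ⟨_, Run.cons (by decide) (by decide)
      (Run.cons (by decide) (by decide)
      (Run.cons (by decide) (by decide)
      (Run.cons (by decide) (by decide)
      (Run.cons (by decide) (by decide)
      (Run.nil _))))),
    by
      intro s hs
      fin_cases s <;>
        first
          | exact absurd hs (by decide)
          | exact Or.inr ⟨0, by decide⟩
          | exact Or.inr ⟨1, by decide⟩⟩
lemma pebbling1 : IsPebbling E10 12 ms1 :=
  ⟨_, Run.cons (by decide) (by decide)
      (Run.cons (by decide) (by decide)
      (Run.cons (by decide) (by decide)
      (Run.cons (by decide) (by decide)
      (Run.cons (by decide) (by decide)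
      (Run.cons (by decide) (by decide)
      (Run.cons (by decide) (by decide)
      (Run.cons (by decide) (by decide)
      (Run.cons (by decide) (by decide)
      (Run.cons (by decide) (by decide)
      (Run.nil _)))))))))),
    by
      intro s hs
      fin_cases s <;>
        first
          | exact absurd hs (by decide)
          | exact Or.inr ⟨0, by decide⟩⟩
lemma pebbling4 : IsPebbling E10 3 ms4 :=
  ⟨_, Run.cons (by decide) (by decide)
      (Run.cons (by decide) (by decide)
      (Run.cons (by decide) (by decide)
      (Run.cons (by decide) (by decide)
      (Run.cons (by decide) (by decide)
      (Run.cons (by decide) (by decide)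
      (Run.cons (by decide) (by decide)
      (Run.cons (by decide) (by decide)
      (Run.cons (by decide) (by decide)
      (Run.cons (by decide) (by decide)
      (Run.cons (by decide) (by decide)
      (Run.cons (by decide) (by decide)
      (Run.nil _)))))))))))),
    by
      intro s hs
      fin_cases s <;>
        first
          | exact absurd hs (by decide)
          | exact Or.inr ⟨0, by decide⟩
          | exact Or.inr ⟨1, by decide⟩⟩
lemma lb1 (ms : List (Move (Fin 10) 1)) (hp : IsPebbling E10 12 ms) :
    10 ≤ cost 10 ms := by
  obtain ⟨Cf, hrun, hterm⟩ := hp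
  have hpi : pebblesF (init (Fin 10) 1) = ∅ := by
    ext x
    simp [pebblesF, init]
  have hsinkcomp : ∀ x : Fin 10, IsSink E10 x → x ∈ computedF ms := by
    intro x hx
    have hx' : x ∈ pebblesF Cf := by
      rcases hterm x hx with h | ⟨j, h⟩
      · exact mem_pebblesF.mpr (Or.inr h)
      · exact mem_pebblesF.mpr (Or.inl ⟨j, h⟩)
    have hmem := run_pebbles hrun hx'
    rw [hpi] at hmem
    simpa using hmem
  have hstep : ∀ x ∈ computedF ms, ∀ u, E10 u x → u ∈ computedF ms := by
    intro x hx u hu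
    have hmem := run_closure hrun x hx u hu
    rw [hpi] at hmem
    simpa using hmem
  have h4 : (4 : Fin 10) ∈ computedF ms := hsinkcomp 4 (by decide)
  have h9 : (9 : Fin 10) ∈ computedF ms := hsinkcomp 9 (by decide)
  have h3 := hstep 4 h4 3 (by decide)
  have h1 := hstep 4 h4 1 (by decide)
  have h2 := hstep 3 h3 2 (by decide)
  have h0 := hstep 3 h3 0 (by decide)
  have h8 := hstep 9 h9 8 (by decide)
  have h6 := hstep 9 h9 6 (by decide)
  have h7 := hstep 8 h8 7 (by decide)
  have h5 := hstep 8 h8 5 (by decide)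
  have hcard : 10 ≤ (computedF ms).card := by
    have huniv : (Finset.univ : Finset (Fin 10)) ⊆ computedF ms := by
      intro x _
      fin_cases x <;> assumption
    have := Finset.card_le_card huniv
    simpa using this
  have hcc := run_computed_card hrun
  have hce := cost_eq 10 ms
  omega

lemma lb4 (ms : List (Move (Fin 10) 4)) (hp : IsPebbling E10 3 ms) :
    6 ≤ cost 10 ms := by
  obtain ⟨Cf, hrun, hterm⟩ := hp
  have hce := cost_eq 10 ms
  rcases Nat.eq_zero_or_pos (ioCount ms) with h0 | hpos
  · have hfil : ms.filter isIO = [] := by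
      have : (ms.filter isIO).length = 0 := h0
      exact List.length_eq_zero_iff.mp this
    have hio : ∀ mv ∈ ms, isIO mv = false := by
      intro mv hm
      by_contra hb
      have hmm : mv ∈ ms.filter isIO :=
        List.mem_filter.mpr ⟨hm, by simpa using hb⟩
      rw [hfil] at hmm
      simp at hmm
    have hblue : Cf.blue = ∅ := by
      have h1 := run_blue hrun hio
      have h2 : (init (Fin 10) 4).blue = ∅ := rfl
      rw [h2] at h1
      exact Finset.subset_empty.mp h1
    obtain ⟨j, hj⟩ : ∃ j, (4 : Fin 10) ∈ Cf.red j := by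
      rcases hterm 4 (by decide) with h | h
      · rw [hblue] at h
        simp at h
      · exact h
    have hinv := invariant j hrun hio
    have hi : (init (Fin 10) 4).red j = ∅ := rfl
    rw [hi, w_empty, w_final hj] at hinv
    have hle := cntj_le j ms
    omega
  · omega

lemma cost_ms2 : cost 10 ms2 = 5 := by decide

lemma cost_ms1 : cost 10 ms1 = 10 := by decide

lemma cost_ms4 : cost 10 ms4 = 6 := by decide

end MPPAux

/-- There exist a finite DAG `G`, a memory budget `r₀ ∈ ℤ⁺`
divisible by 4, and `g ∈ ℤ⁺` such that in the fair comparison the optimal MPP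
cost is non-monotonic in the number of processors:
`OPT⁽²⁾ (2 procs, memory r₀/2 each) < OPT⁽¹⁾ (1 proc, memory r₀)` and
`OPT⁽²⁾ < OPT⁽⁴⁾ (4 procs, memory r₀/4 each)`. -/
theorem stmt10 :
    ∃ (n : ℕ) (E : Fin n → Fin n → Prop) (r₀ g : ℕ),
      IsDag E ∧ 0 < r₀ ∧ 4 ∣ r₀ ∧ 0 < g ∧
      MPP.optCost E 2 (r₀ / 2) g < MPP.optCost E 1 r₀ g ∧
      MPP.optCost E 2 (r₀ / 2) g < MPP.optCost E 4 (r₀ / 4) g := by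
  refine ⟨10, MPPAux.E10, 12, 10, MPPAux.isDag_E10, by norm_num, by norm_num,
    by norm_num, ?_, ?_⟩
  · show MPP.optCost MPPAux.E10 2 6 10 < MPP.optCost MPPAux.E10 1 12 10
    have hub : MPP.optCost MPPAux.E10 2 6 10 ≤ 5 :=
      Nat.sInf_le ⟨MPPAux.ms2, MPPAux.pebbling2, MPPAux.cost_ms2⟩
    have hne : {c | ∃ ms : List (MPP.Move (Fin 10) 1),
        MPP.IsPebbling MPPAux.E10 12 ms ∧ MPP.cost 10 ms = c}.Nonempty :=
      ⟨_, MPPAux.ms1, MPPAux.pebbling1, rfl⟩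
    obtain ⟨ms, hms, hc⟩ := Nat.sInf_mem hne
    have hlb : 10 ≤ MPP.optCost MPPAux.E10 1 12 10 := by
      rw [show MPP.optCost MPPAux.E10 1 12 10 = MPP.cost 10 ms from hc.symm]
      exact MPPAux.lb1 ms hms
    omega
  · show MPP.optCost MPPAux.E10 2 6 10 < MPP.optCost MPPAux.E10 4 3 10
    have hub : MPP.optCost MPPAux.E10 2 6 10 ≤ 5 :=
      Nat.sInf_le ⟨MPPAux.ms2, MPPAux.pebbling2, MPPAux.cost_ms2⟩
    have hne : {c | ∃ ms : List (MPP.Move (Fin 10) 4),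
        MPP.IsPebbling MPPAux.E10 3 ms ∧ MPP.cost 10 ms = c}.Nonempty :=
      ⟨_, MPPAux.ms4, MPPAux.pebbling4, rfl⟩
    obtain ⟨ms, hms, hc⟩ := Nat.sInf_mem hne
    have hlb : 6 ≤ MPP.optCost MPPAux.E10 4 3 10 := by
      rw [show MPP.optCost MPPAux.E10 4 3 10 = MPP.cost 10 ms from hc.symm]
      exact MPPAux.lb4 ms hms
    omega
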